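/- Let p, κ₁, κ₂ be real numbers with 0 < p < 2, and let ν > 0 be a real number. Then every complex root of g_ν lies in the open unit disk (|λ| < 1) if and only if 0 < κ₁ − κ₂, 2κ₁ > 3p·(κ₁ − κ₂), and ν < p·(κ₂ − p(κ₁−κ₂)) / (κ₁ − p(κ₁−κ₂))². -/

import Mathlib

set_option maxHeartbeats 1000000

open Polynomial in
private lemma stmt17_cubic_root (A B C : ℂ) : ∃ x : ℂ, x^3 + A*x^2 + B*x + C = 0 := by
  have h : (0:WithBot ℕ) < (X^3 + Polynomial.C A * X^2 + Polynomial.C B * X + Polynomial.C C).degree := by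
    have : (X^3 + Polynomial.C A * X^2 + Polynomial.C B * X + Polynomial.C C).degree = 3 := by
      compute_degree!
    rw [this]; norm_num
  obtain ⟨z, hz⟩ := Complex.exists_root h
  refine ⟨z, ?_⟩
  have := hz
  simp [Polynomial.IsRoot, Polynomial.eval_add, Polynomial.eval_mul, Polynomial.eval_pow] at this
  linear_combination this

private lemma stmt17_quad_factor (B C : ℂ) :
    ∃ y z : ℂ, ∀ lam : ℂ, lam^2 + B*lam + C = (lam - y)*(lam - z) := by
  obtain ⟨s, hs⟩ := IsAlgClosed.exists_pow_nat_eq (B^2 - 4*C) (n := 2) (by norm_num)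
  exact ⟨(-B+s)/2, (-B-s)/2, fun lam => by linear_combination (1/4 : ℂ) * hs⟩

private lemma stmt17_cubic_factor (A B C : ℂ) :
    ∃ x y z : ℂ, ∀ lam : ℂ, lam^3 + A*lam^2 + B*lam + C = (lam - x)*(lam - y)*(lam - z) := by
  obtain ⟨x, hx⟩ := stmt17_cubic_root A B C
  obtain ⟨y, z, hyz⟩ := stmt17_quad_factor (A + x) (B + A*x + x^2)
  refine ⟨x, y, z, fun lam => ?_⟩
  have h2 := hyz lam
  calc lam^3 + A*lam^2 + B*lam + C
      = (lam - x)*(lam^2 + (A+x)*lam + (B + A*x + x^2)) + (x^3 + A*x^2 + B*x + C) := by ring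
    _ = (lam - x)*((lam - y)*(lam - z)) := by rw [h2, hx]; ring
    _ = (lam - x)*(lam - y)*(lam - z) := by ring

private lemma stmt17_jB (u v t E1 E2 E3 : ℝ) (h1 : 2*u + t = E1) (h2 : u^2+v^2+2*u*t = E2)
    (h3 : (u^2+v^2)*t = E3) :
    (u^2+v^2 < 1 ∧ |t| < 1) ↔
    (0 < 1-E1+E2-E3 ∧ 0 < 1+E1+E2+E3 ∧ E3^2 < 1 ∧ 0 < 1-E2+E1*E3-E3^2) := by
  subst h1 h2 h3
  have q1 : 1-(2*u+t)+(u^2+v^2+2*u*t)-(u^2+v^2)*t = (1-t)*((1-u)^2+v^2) := by ring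
  have q2 : 1+(2*u+t)+(u^2+v^2+2*u*t)+(u^2+v^2)*t = (1+t)*((1+u)^2+v^2) := by ring
  have q4 : 1-(u^2+v^2+2*u*t)+(2*u+t)*((u^2+v^2)*t)-((u^2+v^2)*t)^2
      = (1-(u^2+v^2))*((1-u*t)^2+(v*t)^2) := by ring
  rw [q1, q2, q4]
  have hw0 : (0:ℝ) ≤ u^2+v^2 := by positivity
  constructor
  · rintro ⟨hw, ht⟩
    obtain ⟨ht1, ht2⟩ := abs_lt.mp ht
    have hu2 : u^2 < 1 := by nlinarith [sq_nonneg v]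
    have hu1 : u < 1 := by nlinarith
    have hu1' : -1 < u := by nlinarith
    have ha : (0:ℝ) < (1-u)^2+v^2 := by
      have : (0:ℝ) < (1-u)^2 := pow_pos (by linarith) 2
      nlinarith [sq_nonneg v]
    have hb : (0:ℝ) < (1+u)^2+v^2 := by
      have : (0:ℝ) < (1+u)^2 := pow_pos (by linarith) 2
      nlinarith [sq_nonneg v]
    have ht2' : t^2 < 1 := by nlinarith
    refine ⟨mul_pos (by linarith) ha, mul_pos (by linarith) hb, ?_, ?_⟩
    · have : ((u^2+v^2)*t)^2 = (u^2+v^2)^2 * t^2 := by ring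
      rw [this]
      nlinarith [mul_nonneg (mul_nonneg hw0 hw0) (sq_nonneg t), sq_nonneg (u^2+v^2)]
    · have hut : (u*t)^2 < 1 := by nlinarith [sq_nonneg (u*t), sq_nonneg (v*t)]
      have h5 : (0:ℝ) < (1-u*t)^2+(v*t)^2 := by nlinarith [sq_nonneg (v*t), sq_nonneg (1-u*t)]
      exact mul_pos (by linarith) h5
  · rintro ⟨J1, J2, J3, J4⟩
    have hq : (0:ℝ) ≤ (1-u)^2+v^2 := by positivity
    have hq2 : (0:ℝ) ≤ (1+u)^2+v^2 := by positivity
    have hq4 : (0:ℝ) ≤ (1-u*t)^2+(v*t)^2 := by positivity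
    have ht1 : t < 1 := by nlinarith
    have ht2 : -1 < t := by nlinarith
    have hw : u^2+v^2 < 1 := by nlinarith
    exact ⟨hw, abs_lt.mpr ⟨ht2, ht1⟩⟩

private lemma stmt17_noPair (r s t : ℝ) (H1 : 0 < (1-r)*(1-s)*(1-t)) (H2 : 0 < (1+r)*(1+s)*(1+t))
    (H3 : (r*s*t)^2 < 1) (H4 : 0 < (1-r*s)*(1-r*t)*(1-s*t)) (hr : 1 ≤ r^2) (hs : 1 ≤ s^2) :
    False := by
  have hrc : r ≤ -1 ∨ 1 ≤ r := by
    rcases le_or_gt 1 r with h|h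
    · exact Or.inr h
    · left; nlinarith
  have hsc : s ≤ -1 ∨ 1 ≤ s := by
    rcases le_or_gt 1 s with h|h
    · exact Or.inr h
    · left; nlinarith
  have same : 1 ≤ r*s → False := by
    intro hab
    have hat : (r*t)^2 < 1 := by
      nlinarith [mul_nonneg (mul_nonneg (sq_nonneg r) (sq_nonneg t)) (sub_nonneg.mpr hs)]
    have hbt : (s*t)^2 < 1 := by
      nlinarith [mul_nonneg (mul_nonneg (sq_nonneg s) (sq_nonneg t)) (sub_nonneg.mpr hr)]
    have h1 : r*t < 1 := by nlinarith [sq_nonneg (r*t-1)]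
    have h2 : s*t < 1 := by nlinarith [sq_nonneg (s*t-1)]
    nlinarith [mul_pos (by linarith : (0:ℝ) < 1-r*t) (by linarith : (0:ℝ) < 1-s*t)]
  have opp : ∀ a b : ℝ, 1 ≤ a → b ≤ -1 →
      (0 < (1-a)*(1-b)*(1-t)) → (0 < (1+a)*(1+b)*(1+t)) → False := by
    intro a b ha hb Ha Hb
    have ht : 1 < t := by
      by_contra h
      push_neg at h
      have k1 : (0:ℝ) ≤ a-1 := by linarith
      have k2 : (0:ℝ) ≤ 1-t := by linarith
      have k3 : (0:ℝ) ≤ 1-b := by linarith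
      nlinarith [mul_nonneg (mul_nonneg k1 k2) k3]
    have k1 : (0:ℝ) ≤ 1+a := by linarith
    have k2 : (0:ℝ) ≤ -(1+b) := by linarith
    have k3 : (0:ℝ) ≤ 1+t := by linarith
    nlinarith [mul_nonneg (mul_nonneg k1 k2) k3]
  rcases hrc with hr1|hr1 <;> rcases hsc with hs1|hs1
  · have k1 : (0:ℝ) ≤ -r-1 := by linarith
    have k2 : (0:ℝ) ≤ -s-1 := by linarith
    exact same (by nlinarith [mul_nonneg k1 k2])
  · have e1 : 0 < (1-s)*(1-r)*(1-t) := by nlinarith [H1]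
    have e2 : 0 < (1+s)*(1+r)*(1+t) := by nlinarith [H2]
    exact opp s r hs1 hr1 e1 e2
  · exact opp r s hr1 hs1 H1 H2
  · have k1 : (0:ℝ) ≤ r-1 := by linarith
    have k2 : (0:ℝ) ≤ s-1 := by linarith
    exact same (by nlinarith [mul_nonneg k1 k2])

private lemma stmt17_keyA (a b c : ℝ) (K1 : 0 < (1-a)*(1-b)*(1-c)) (K2 : 0 < (1+a)*(1+b)*(1+c))
    (K3 : (a*b*c)^2 < 1) (K4 : 0 < (1-a*b)*(1-a*c)*(1-b*c)) : |a| < 1 := by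
  by_contra h
  push_neg at h
  have ha2 : 1 ≤ a^2 := by nlinarith [sq_abs a, abs_nonneg a]
  have hb2 : b^2 < 1 := by
    by_contra hb
    push_neg at hb
    exact stmt17_noPair a b c K1 K2 K3 K4 ha2 hb
  have hc2 : c^2 < 1 := by
    by_contra hc
    push_neg at hc
    exact stmt17_noPair a c b (by linarith [K1]) (by linarith [K2]) (by nlinarith [K3])
      (by linarith [K4]) ha2 hc
  have pb1 : (0:ℝ) < 1-b := by nlinarith
  have pb2 : (0:ℝ) < 1+b := by nlinarith
  have pc1 : (0:ℝ) < 1-c := by nlinarith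
  have pc2 : (0:ℝ) < 1+c := by nlinarith
  have h1 : (0:ℝ) < 1-a := by nlinarith [mul_pos pb1 pc1]
  have h2 : (0:ℝ) < 1+a := by nlinarith [mul_pos pb2 pc2]
  nlinarith

private lemma stmt17_jA (r s t E1 E2 E3 : ℝ) (h1 : r+s+t = E1) (h2 : r*s+r*t+s*t = E2) (h3 : r*s*t = E3) :
    (|r| < 1 ∧ |s| < 1 ∧ |t| < 1) ↔
    (0 < 1-E1+E2-E3 ∧ 0 < 1+E1+E2+E3 ∧ E3^2 < 1 ∧ 0 < 1-E2+E1*E3-E3^2) := by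
  subst h1 h2 h3
  have q1 : 1-(r+s+t)+(r*s+r*t+s*t)-r*s*t = (1-r)*(1-s)*(1-t) := by ring
  have q2 : 1+(r+s+t)+(r*s+r*t+s*t)+r*s*t = (1+r)*(1+s)*(1+t) := by ring
  have q4 : 1-(r*s+r*t+s*t)+(r+s+t)*(r*s*t)-(r*s*t)^2 = (1-r*s)*(1-r*t)*(1-s*t) := by ring
  rw [q1, q2, q4]
  constructor
  · rintro ⟨hr, hs, ht⟩
    obtain ⟨hr1, hr2⟩ := abs_lt.mp hr
    obtain ⟨hs1, hs2⟩ := abs_lt.mp hs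
    obtain ⟨ht1, ht2⟩ := abs_lt.mp ht
    have xr : r^2 < 1 := by nlinarith
    have xs : s^2 < 1 := by nlinarith
    have xt : t^2 < 1 := by nlinarith
    have prs : (r*s)^2 < 1 := by
      nlinarith [mul_nonneg (sq_nonneg r) (by linarith : (0:ℝ) ≤ 1-s^2)]
    have prt : (r*t)^2 < 1 := by
      nlinarith [mul_nonneg (sq_nonneg r) (by linarith : (0:ℝ) ≤ 1-t^2)]
    have pst : (s*t)^2 < 1 := by
      nlinarith [mul_nonneg (sq_nonneg s) (by linarith : (0:ℝ) ≤ 1-t^2)]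
    have hrs : r*s < 1 := by nlinarith [sq_nonneg (r*s-1)]
    have hrt : r*t < 1 := by nlinarith [sq_nonneg (r*t-1)]
    have hst : s*t < 1 := by nlinarith [sq_nonneg (s*t-1)]
    have a1 : (0:ℝ) < 1-r := by linarith
    have a2 : (0:ℝ) < 1-s := by linarith
    have a3 : (0:ℝ) < 1-t := by linarith
    have b1 : (0:ℝ) < 1+r := by linarith
    have b2 : (0:ℝ) < 1+s := by linarith
    have b3 : (0:ℝ) < 1+t := by linarith
    have c1 : (0:ℝ) < 1-r*s := by linarith
    have c2 : (0:ℝ) < 1-r*t := by linarith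
    have c3 : (0:ℝ) < 1-s*t := by linarith
    refine ⟨mul_pos (mul_pos a1 a2) a3, mul_pos (mul_pos b1 b2) b3, ?_,
      mul_pos (mul_pos c1 c2) c3⟩
    nlinarith [mul_nonneg (sq_nonneg (r*s)) (by linarith : (0:ℝ) ≤ 1-t^2)]
  · rintro ⟨J1, J2, J3, J4⟩
    have m1 : 0 < (1-s)*(1-r)*(1-t) := by linarith [J1]
    have m2 : 0 < (1+s)*(1+r)*(1+t) := by linarith [J2]
    have m3 : (s*r*t)^2 < 1 := by
      have : (s*r*t)^2 = (r*s*t)^2 := by ring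
      rw [this]; exact J3
    have m4 : 0 < (1-s*r)*(1-s*t)*(1-r*t) := by linarith [J4]
    have n1 : 0 < (1-t)*(1-r)*(1-s) := by linarith [J1]
    have n2 : 0 < (1+t)*(1+r)*(1+s) := by linarith [J2]
    have n3 : (t*r*s)^2 < 1 := by
      have : (t*r*s)^2 = (r*s*t)^2 := by ring
      rw [this]; exact J3
    have n4 : 0 < (1-t*r)*(1-t*s)*(1-r*s) := by linarith [J4]
    exact ⟨stmt17_keyA r s t J1 J2 J3 J4, stmt17_keyA s r t m1 m2 m3 m4, stmt17_keyA t r s n1 n2 n3 n4⟩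

open Complex in
private lemma stmt17_schur3_pair (E1 E2 E3 : ℝ) (x : ℂ) (t : ℝ)
    (h1 : x + (starRingEnd ℂ) x + (t:ℂ) = (E1:ℝ))
    (h2 : x * (starRingEnd ℂ) x + x*(t:ℂ) + (starRingEnd ℂ) x * (t:ℂ) = (E2:ℝ))
    (h3 : x * (starRingEnd ℂ) x * (t:ℂ) = (E3:ℝ)) :
    (‖x‖ < 1 ∧ ‖(starRingEnd ℂ) x‖ < 1 ∧ |t| < 1) ↔
    (0 < 1-E1+E2-E3 ∧ 0 < 1+E1+E2+E3 ∧ E3^2 < 1 ∧ 0 < 1-E2+E1*E3-E3^2) := by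
  have hac : x + (starRingEnd ℂ) x = ((2*x.re : ℝ) : ℂ) := by
    rw [Complex.add_conj]
  have hxx : x * (starRingEnd ℂ) x = ((x.re^2 + x.im^2 : ℝ) : ℂ) := by
    rw [Complex.mul_conj]
    norm_cast
    simp [Complex.normSq_apply]
    ring
  have e1 : 2*x.re + t = E1 := by
    have : ((2*x.re + t : ℝ) : ℂ) = ((E1:ℝ):ℂ) := by
      push_cast
      push_cast at hac
      linear_combination h1 - hac
    exact_mod_cast this
  have e2 : x.re^2 + x.im^2 + 2*x.re*t = E2 := by
    have : ((x.re^2 + x.im^2 + 2*x.re*t : ℝ) : ℂ) = ((E2:ℝ):ℂ) := by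
      push_cast
      push_cast at hac hxx
      linear_combination h2 - hxx - (t:ℂ)*hac
    exact_mod_cast this
  have e3 : (x.re^2 + x.im^2)*t = E3 := by
    have : (((x.re^2 + x.im^2)*t : ℝ) : ℂ) = ((E3:ℝ):ℂ) := by
      push_cast
      push_cast at hxx
      linear_combination h3 - (t:ℂ)*hxx
    exact_mod_cast this
  have habs : ‖x‖ < 1 ↔ x.re^2 + x.im^2 < 1 := by
    have hsq : x.re^2 + x.im^2 = ‖x‖^2 := by
      rw [Complex.sq_norm, Complex.normSq_apply]; ring
    rw [hsq]
    constructor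
    · intro h
      nlinarith [norm_nonneg x]
    · intro h
      nlinarith [norm_nonneg x]
  have hconjabs : ‖(starRingEnd ℂ) x‖ = ‖x‖ := Complex.norm_conj x
  rw [hconjabs]
  have := stmt17_jB x.re x.im t E1 E2 E3 e1 e2 e3
  rw [← this, habs]
  tauto


private lemma stmt17_schur3C (E1 E2 E3 : ℝ) (x y z : ℂ)
    (h1 : x+y+z = (E1:ℝ)) (h2 : x*y+x*z+y*z = (E2:ℝ)) (h3 : x*y*z = (E3:ℝ))
    (hx : x.im ≠ 0) :
    (‖x‖ < 1 ∧ ‖y‖ < 1 ∧ ‖z‖ < 1) ↔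
    (0 < 1-E1+E2-E3 ∧ 0 < 1+E1+E2+E3 ∧ E3^2 < 1 ∧ 0 < 1-E2+E1*E3-E3^2) := by
  have expand : ∀ w : ℂ, (w-x)*(w-y)*(w-z) = w^3 - (E1:ℂ)*w^2 + (E2:ℂ)*w - (E3:ℂ) := by
    intro w
    linear_combination (-w^2)*h1 + w*h2 - h3
  have hcx : ((starRingEnd ℂ) x - x)*((starRingEnd ℂ) x - y)*((starRingEnd ℂ) x - z) = 0 := by
    rw [expand]
    have : ((starRingEnd ℂ) x)^3 - (E1:ℂ)*((starRingEnd ℂ) x)^2 + (E2:ℂ)*((starRingEnd ℂ) x)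
        - (E3:ℂ) = (starRingEnd ℂ) (x^3 - (E1:ℂ)*x^2 + (E2:ℂ)*x - (E3:ℂ)) := by
      simp [map_sub, map_add, map_mul, map_pow, Complex.conj_ofReal]
    rw [this, ← expand x]
    simp
  have hne : (starRingEnd ℂ) x - x ≠ 0 := by
    intro h
    apply hx
    have : (starRingEnd ℂ) x = x := by linear_combination h
    exact (Complex.conj_eq_iff_im.mp this)
  have hyz : (starRingEnd ℂ) x = y ∨ (starRingEnd ℂ) x = z := by
    rcases mul_eq_zero.mp hcx with h | h
    · rcases mul_eq_zero.mp h with h' | h'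
      · exact absurd h' hne
      · left; linear_combination h'
    · right; linear_combination h
  rcases hyz with hy | hz
  · -- y = conj x, z real
    subst hy
    have hzim : z.im = 0 := by
      have := congrArg Complex.im h1
      simpa [Complex.add_im, Complex.conj_im] using this
    have hzre : z = ((z.re : ℝ) : ℂ) := by
      apply Complex.ext <;> simp [hzim]
    rw [hzre] at h1 h2 h3
    have := stmt17_schur3_pair E1 E2 E3 x z.re h1 h2 h3
    rw [← this, hzre, Complex.norm_real]
    simp
  · -- z = conj x, y real
    subst hz
    have hyim : y.im = 0 := by
      have := congrArg Complex.im h1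
      simpa [Complex.add_im, Complex.conj_im] using this
    have hyre : y = ((y.re : ℝ) : ℂ) := by
      apply Complex.ext <;> simp [hyim]
    rw [hyre] at h1 h2 h3
    have h1' : x + (starRingEnd ℂ) x + ((y.re:ℝ):ℂ) = ((E1:ℝ):ℂ) := by linear_combination h1
    have h2' : x * (starRingEnd ℂ) x + x*((y.re:ℝ):ℂ) + (starRingEnd ℂ) x * ((y.re:ℝ):ℂ)
        = ((E2:ℝ):ℂ) := by linear_combination h2
    have h3' : x * (starRingEnd ℂ) x * ((y.re:ℝ):ℂ) = ((E3:ℝ):ℂ) := by linear_combination h3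
    have := stmt17_schur3_pair E1 E2 E3 x y.re h1' h2' h3'
    rw [← this, hyre, Complex.norm_real]
    simp
    tauto

private lemma stmt17_schur3 (E1 E2 E3 : ℝ) (x y z : ℂ)
    (h1 : x+y+z = (E1:ℝ)) (h2 : x*y+x*z+y*z = (E2:ℝ)) (h3 : x*y*z = (E3:ℝ)) :
    (‖x‖ < 1 ∧ ‖y‖ < 1 ∧ ‖z‖ < 1) ↔
    (0 < 1-E1+E2-E3 ∧ 0 < 1+E1+E2+E3 ∧ E3^2 < 1 ∧ 0 < 1-E2+E1*E3-E3^2) := by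
  by_cases hx : x.im = 0
  · by_cases hy : y.im = 0
    · by_cases hz : z.im = 0
      · -- all real
        have hxr : x = ((x.re : ℝ) : ℂ) := by apply Complex.ext <;> simp [hx]
        have hyr : y = ((y.re : ℝ) : ℂ) := by apply Complex.ext <;> simp [hy]
        have hzr : z = ((z.re : ℝ) : ℂ) := by apply Complex.ext <;> simp [hz]
        rw [hxr, hyr, hzr] at h1 h2 h3 ⊢
        rw [Complex.norm_real, Complex.norm_real, Complex.norm_real, Real.norm_eq_abs, Real.norm_eq_abs, Real.norm_eq_abs]
        refine stmt17_jA x.re y.re z.re E1 E2 E3 ?_ ?_ ?_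
        · exact_mod_cast h1
        · exact_mod_cast h2
        · exact_mod_cast h3
      · -- z non-real
        have h1' : z+x+y = ((E1:ℝ):ℂ) := by linear_combination h1
        have h2' : z*x+z*y+x*y = ((E2:ℝ):ℂ) := by linear_combination h2
        have h3' : z*x*y = ((E3:ℝ):ℂ) := by linear_combination h3
        rw [← stmt17_schur3C E1 E2 E3 z x y h1' h2' h3' hz]
        tauto
    · -- y non-real
      have h1' : y+x+z = ((E1:ℝ):ℂ) := by linear_combination h1
      have h2' : y*x+y*z+x*z = ((E2:ℝ):ℂ) := by linear_combination h2
      have h3' : y*x*z = ((E3:ℝ):ℂ) := by linear_combination h3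
      rw [← stmt17_schur3C E1 E2 E3 y x z h1' h2' h3' hy]
      tauto
  · exact stmt17_schur3C E1 E2 E3 x y z h1 h2 h3 hx

private lemma stmt17_final_equiv (p κ₁ κ₂ ν : ℝ) (hp0 : 0 < p) (hp2 : p < 2) (hν : 0 < ν) :
    (0 < 1-(3-p)+(3-2*p+κ₁*ν)-(1-p+κ₁*ν-p*(κ₁-κ₂)*ν) ∧
     0 < 1+(3-p)+(3-2*p+κ₁*ν)+(1-p+κ₁*ν-p*(κ₁-κ₂)*ν) ∧
     (1-p+κ₁*ν-p*(κ₁-κ₂)*ν)^2 < 1 ∧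
     0 < 1-(3-2*p+κ₁*ν)+(3-p)*(1-p+κ₁*ν-p*(κ₁-κ₂)*ν)-(1-p+κ₁*ν-p*(κ₁-κ₂)*ν)^2) ↔
    (0 < κ₁ - κ₂ ∧ 3*p*(κ₁-κ₂) < 2*κ₁ ∧
      ν < p*(κ₂-p*(κ₁-κ₂))/(κ₁-p*(κ₁-κ₂))^2) := by
  constructor
  · rintro ⟨J1, J2, J3, J4⟩
    have hδ : 0 < κ₁-κ₂ := by nlinarith [mul_pos hp0 hν]
    have hD : 0 < ν*(p*((κ₁-p*(κ₁-κ₂))-(κ₁-κ₂)) - ν*(κ₁-p*(κ₁-κ₂))^2) := by linarith [J4]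
    have hX : 0 < p*((κ₁-p*(κ₁-κ₂))-(κ₁-κ₂)) - ν*(κ₁-p*(κ₁-κ₂))^2 := by nlinarith [hD]
    have hm : 0 < κ₁-p*(κ₁-κ₂) := by
      nlinarith [mul_pos hp0 hδ, mul_nonneg hν.le (sq_nonneg (κ₁-p*(κ₁-κ₂)))]
    refine ⟨hδ, ?_, ?_⟩
    · nlinarith [mul_nonneg hν.le (sq_nonneg (κ₁-p*(κ₁-κ₂))),
        mul_pos (show (0:ℝ) < 2-p by linarith) hm]
    · rw [lt_div_iff₀ (pow_pos hm 2)]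
      linarith [hX]
  · rintro ⟨hδ, h2, h3⟩
    have hmne : (κ₁-p*(κ₁-κ₂)) ≠ 0 := by
      intro h
      rw [h] at h3
      norm_num at h3
      linarith
    have hm2 : 0 < (κ₁-p*(κ₁-κ₂))^2 :=
      lt_of_le_of_ne (sq_nonneg _) (Ne.symm (pow_ne_zero 2 hmne))
    have hX : ν*(κ₁-p*(κ₁-κ₂))^2 < p*(κ₂-p*(κ₁-κ₂)) := (lt_div_iff₀ hm2).mp h3
    have hm : 0 < κ₁-p*(κ₁-κ₂) := by
      nlinarith [mul_pos hp0 hδ, mul_pos hν hm2]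
    have hup : ν*(κ₁-p*(κ₁-κ₂)) < p := by nlinarith [hX, mul_pos hp0 hδ]
    have hlo : 0 < ν*(κ₁-p*(κ₁-κ₂)) := mul_pos hν hm
    refine ⟨?_, ?_, ?_, ?_⟩
    · nlinarith [mul_pos (mul_pos hp0 hν) hδ]
    · nlinarith [mul_pos hν hm, mul_pos (mul_pos hp0 hν) hδ]
    · have b1 : 1-p+κ₁*ν-p*(κ₁-κ₂)*ν < 1 := by nlinarith [hup]
      have b2 : -1 < 1-p+κ₁*ν-p*(κ₁-κ₂)*ν := by nlinarith [hlo]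
      nlinarith [mul_pos (show (0:ℝ) < 1-(1-p+κ₁*ν-p*(κ₁-κ₂)*ν) by linarith)
        (show (0:ℝ) < 1+(1-p+κ₁*ν-p*(κ₁-κ₂)*ν) by linarith)]
    · have : 0 < ν*(p*((κ₁-p*(κ₁-κ₂))-(κ₁-κ₂)) - ν*(κ₁-p*(κ₁-κ₂))^2) :=
        mul_pos hν (by linarith [hX])
      linarith [this]


/-- Per-eigenvalue Schur stability criterion (core of Theorem 3 of the paper): for
`0 < p < 2` and `ν > 0`, every complex root of
`g_ν(λ) = (λ−1)²(λ−1+p) + ((λ−1)κ₁ + p(κ₁−κ₂))ν` lies in the open unit disk iff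
`0 < κ₁ − κ₂`, `2κ₁ > 3p(κ₁−κ₂)` and `ν < p(κ₂ − p(κ₁−κ₂))/(κ₁ − p(κ₁−κ₂))²`. -/
theorem stmt17 (p κ₁ κ₂ ν : ℝ) (hp0 : 0 < p) (hp2 : p < 2) (hν : 0 < ν) :
    (∀ lam : ℂ,
      (lam - 1) ^ 2 * (lam - 1 + (p : ℂ)) +
          ((lam - 1) * (κ₁ : ℂ) + (p : ℂ) * ((κ₁ : ℂ) - (κ₂ : ℂ))) * (ν : ℂ) = 0 →
        ‖lam‖ < 1) ↔
    (0 < κ₁ - κ₂ ∧ 3 * p * (κ₁ - κ₂) < 2 * κ₁ ∧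
      ν < p * (κ₂ - p * (κ₁ - κ₂)) / (κ₁ - p * (κ₁ - κ₂)) ^ 2) := by
  obtain ⟨x, y, z, hf⟩ := stmt17_cubic_factor (-((3-p:ℝ):ℂ)) (((3-2*p+κ₁*ν:ℝ)):ℂ)
    (-((1-p+κ₁*ν-p*(κ₁-κ₂)*ν:ℝ):ℂ))
  have hg : ∀ lam : ℂ, (lam - 1) ^ 2 * (lam - 1 + (p : ℂ)) +
      ((lam - 1) * (κ₁ : ℂ) + (p : ℂ) * ((κ₁ : ℂ) - (κ₂ : ℂ))) * (ν : ℂ)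
      = (lam - x)*(lam - y)*(lam - z) := by
    intro lam
    rw [← hf lam]
    push_cast
    ring
  have he3 : x*y*z = ((1-p+κ₁*ν-p*(κ₁-κ₂)*ν:ℝ):ℂ) := by linear_combination hf 0
  have he2 : x*y+x*z+y*z = ((3-2*p+κ₁*ν:ℝ):ℂ) := by
    linear_combination (-(1:ℂ)/2) * hf 1 + (1/2) * hf (-1)
  have he1 : x+y+z = ((3-p:ℝ):ℂ) := by
    linear_combination ((1:ℂ)/2) * hf 1 + (1/2) * hf (-1) + hf 0 - 2*he3
  have habs : (∀ lam : ℂ,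
      (lam - 1) ^ 2 * (lam - 1 + (p : ℂ)) +
          ((lam - 1) * (κ₁ : ℂ) + (p : ℂ) * ((κ₁ : ℂ) - (κ₂ : ℂ))) * (ν : ℂ) = 0 →
        ‖lam‖ < 1) ↔
      (‖x‖ < 1 ∧ ‖y‖ < 1 ∧ ‖z‖ < 1) := by
    constructor
    · intro h
      refine ⟨h x ?_, h y ?_, h z ?_⟩ <;> rw [hg] <;> ring
    · rintro ⟨ha, hb, hc⟩ lam hlam
      rw [hg lam] at hlam
      rcases mul_eq_zero.mp hlam with h | h
      · rcases mul_eq_zero.mp h with h' | h'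
        · have : lam = x := by linear_combination h'
          rwa [this]
        · have : lam = y := by linear_combination h'
          rwa [this]
      · have : lam = z := by linear_combination h
        rwa [this]
  rw [habs, stmt17_schur3 (3-p) (3-2*p+κ₁*ν) (1-p+κ₁*ν-p*(κ₁-κ₂)*ν) x y z he1 he2 he3]
  exact stmt17_final_equiv p κ₁ κ₂ ν hp0 hp2 hν
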